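/- Under hypothesis (H1), φ_{A,k} is convex if and only if A is convex; moreover φ_{A,k} is quasiconvex if and only if A is convex. -/

import Mathlib

open Set Pointwise

noncomputable def phiF {Y : Type*} [AddCommGroup Y] [Module ℝ Y] (A : Set Y) (k : Y) (y : Y) : EReal :=
  sInf ((fun t : ℝ => (t : EReal)) '' {t : ℝ | y - t • k ∈ A})

def recCone {Y : Type*} [AddCommGroup Y] [Module ℝ Y] (A : Set Y) : Set Y :=
  {u | ∀ a ∈ A, ∀ t : ℝ, 0 ≤ t → a + t • u ∈ A}

def algInterior {Y : Type*} [AddCommGroup Y] [Module ℝ Y] (C : Set Y) : Set Y :=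
  {x ∈ C | ∀ y : Y, ∃ ε : ℝ, 0 < ε ∧ ∀ t : ℝ, 0 ≤ t → t ≤ ε → x + t • y ∈ C}

lemma phiF_le_iff {Y : Type*} [AddCommGroup Y] [Module ℝ Y] [TopologicalSpace Y]
    [IsTopologicalAddGroup Y] [ContinuousSMul ℝ Y]
    (A : Set Y) (hAc : IsClosed A)
    (k : Y) (hrec : ∀ a ∈ A, ∀ t : ℝ, 0 ≤ t → a - t • k ∈ A)
    (y : Y) (t : ℝ) : phiF A k y ≤ (t : EReal) ↔ y - t • k ∈ A := by
  constructor
  · intro h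
    set S : Set ℝ := {s : ℝ | y - s • k ∈ A} with hS
    have hSclosed : IsClosed S := hAc.preimage (by continuity)
    have hup : ∀ s ∈ S, ∀ s' : ℝ, s ≤ s' → s' ∈ S := by
      intro s hs s' hss'
      have := hrec _ hs (s' - s) (by linarith)
      have he : y - s • k - (s' - s) • k = y - s' • k := by
        rw [sub_smul]; abel
      rwa [he] at this
    have hIoi : Ioi t ⊆ S := by
      intro s hs
      have hlt : sInf ((fun t : ℝ => (t : EReal)) '' S) < (s : EReal) := by
        refine lt_of_le_of_lt h ?_
        exact_mod_cast hs
      obtain ⟨b, hb, hbs⟩ := sInf_lt_iff.mp hlt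
      obtain ⟨r, hr, rfl⟩ := hb
      have hrs : (r : EReal) < (s : EReal) := hbs
      exact hup r hr s (le_of_lt (by exact_mod_cast hrs))
    have h1 : closure (Ioi t) ⊆ S := hSclosed.closure_subset_iff.mpr hIoi
    rw [closure_Ioi] at h1
    exact h1 self_mem_Ici
  · intro h
    exact sInf_le ⟨t, h, rfl⟩

theorem stmt_8 {Y : Type*} [AddCommGroup Y] [Module ℝ Y] [TopologicalSpace Y]
    [IsTopologicalAddGroup Y] [ContinuousSMul ℝ Y]
    (A : Set Y) (hAc : IsClosed A) (hAne : A.Nonempty) (hAp : A ≠ Set.univ)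
    (k : Y) (hk : k ≠ 0) (hrec : ∀ a ∈ A, ∀ t : ℝ, 0 ≤ t → a - t • k ∈ A) :
    (Convex ℝ {p : Y × ℝ | phiF A k p.1 ≤ (p.2 : EReal)} ↔ Convex ℝ A) ∧
      ((Convex ℝ {y | ∃ t : ℝ, y - t • k ∈ A} ∧
          ∀ y₁ ∈ {y | ∃ t : ℝ, y - t • k ∈ A}, ∀ y₂ ∈ {y | ∃ t : ℝ, y - t • k ∈ A},
            ∀ l : ℝ, 0 < l → l < 1 →
              phiF A k (l • y₁ + (1 - l) • y₂) ≤ max (phiF A k y₁) (phiF A k y₂)) ↔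
        Convex ℝ A) := by
  have key : ∀ (y : Y) (t : ℝ), phiF A k y ≤ (t : EReal) ↔ y - t • k ∈ A :=
    phiF_le_iff A hAc k hrec
  have epi_eq : {p : Y × ℝ | phiF A k p.1 ≤ (p.2 : EReal)} =
      {p : Y × ℝ | p.1 - p.2 • k ∈ A} := by
    ext p; exact key p.1 p.2
  have hAconv_of_epi : Convex ℝ {p : Y × ℝ | phiF A k p.1 ≤ (p.2 : EReal)} → Convex ℝ A := by
    intro hE a ha b hb la lb hla hlb hlab
    have ha' : (a, (0:ℝ)) ∈ {p : Y × ℝ | phiF A k p.1 ≤ (p.2 : EReal)} := by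
      rw [epi_eq]; simpa using ha
    have hb' : (b, (0:ℝ)) ∈ {p : Y × ℝ | phiF A k p.1 ≤ (p.2 : EReal)} := by
      rw [epi_eq]; simpa using hb
    have := hE ha' hb' hla hlb hlab
    rw [epi_eq] at this
    simpa [Prod.smul_mk] using this
  have hepi_of_Aconv : Convex ℝ A → Convex ℝ {p : Y × ℝ | phiF A k p.1 ≤ (p.2 : EReal)} := by
    intro hA
    rw [epi_eq]
    intro p hp q hq la lb hla hlb hlab
    have hmem := hA hp hq hla hlb hlab
    have he : (la • p + lb • q).1 - (la • p + lb • q).2 • k =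
        la • (p.1 - p.2 • k) + lb • (q.1 - q.2 • k) := by
      simp only [Prod.fst_add, Prod.snd_add, Prod.smul_fst, Prod.smul_snd, smul_eq_mul]
      module
    rw [Set.mem_setOf_eq, he]
    exact hmem
  refine ⟨⟨hAconv_of_epi, hepi_of_Aconv⟩, ?_, ?_⟩
  · rintro ⟨-, hq⟩
    intro a ha b hb la lb hla hlb hlab
    rcases eq_or_lt_of_le hla with h0 | hla'
    · have : lb = 1 := by linarith
      simpa [← h0, this] using hb
    rcases eq_or_lt_of_le hlb with h0 | hlb'
    · have : la = 1 := by linarith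
      simpa [← h0, this] using ha
    have hla1 : la < 1 := by linarith
    have haD : a ∈ {y | ∃ t : ℝ, y - t • k ∈ A} := ⟨0, by simpa using ha⟩
    have hbD : b ∈ {y | ∃ t : ℝ, y - t • k ∈ A} := ⟨0, by simpa using hb⟩
    have hφa : phiF A k a ≤ ((0:ℝ) : EReal) := (key a 0).mpr (by simpa using ha)
    have hφb : phiF A k b ≤ ((0:ℝ) : EReal) := (key b 0).mpr (by simpa using hb)
    have hlbeq : lb = 1 - la := by linarith
    have hcomb : phiF A k (la • a + lb • b) ≤ ((0:ℝ) : EReal) := by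
      rw [hlbeq]
      exact le_trans (hq a haD b hbD la hla' hla1) (max_le hφa hφb)
    have := (key _ 0).mp hcomb
    simpa using this
  · intro hA
    refine ⟨?_, ?_⟩
    · -- domain is convex
      rintro a ⟨ta, hta⟩ b ⟨tb, htb⟩ la lb hla hlb hlab
      refine ⟨la * ta + lb * tb, ?_⟩
      have hmem := hA hta htb hla hlb hlab
      have he : la • a + lb • b - (la * ta + lb * tb) • k =
          la • (a - ta • k) + lb • (b - tb • k) := by module
      rwa [he]
    · intro y₁ hy₁ y₂ hy₂ l hl hl1
      have hcomb : ∀ t : ℝ, y₁ - t • k ∈ A → y₂ - t • k ∈ A →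
          phiF A k (l • y₁ + (1 - l) • y₂) ≤ (t : EReal) := by
        intro t h1 h2
        refine (key _ t).mpr ?_
        have hmem := hA h1 h2 hl.le (by linarith : (0:ℝ) ≤ 1 - l)
          (by ring : l + (1 - l) = 1)
        have he : l • y₁ + (1 - l) • y₂ - t • k =
            l • (y₁ - t • k) + (1 - l) • (y₂ - t • k) := by module
        rwa [he]
      rcases eq_top_or_lt_top (max (phiF A k y₁) (phiF A k y₂)) with hmt | hmlt
      · rw [hmt]; exact le_top
      rcases eq_bot_or_bot_lt (max (phiF A k y₁) (phiF A k y₂)) with hmb | hmbot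
      · have hb1 : phiF A k y₁ = ⊥ :=
          le_bot_iff.mp (hmb ▸ le_max_left (phiF A k y₁) (phiF A k y₂))
        have hb2 : phiF A k y₂ = ⊥ :=
          le_bot_iff.mp (hmb ▸ le_max_right (phiF A k y₁) (phiF A k y₂))
        have hall : ∀ t : ℝ, phiF A k (l • y₁ + (1 - l) • y₂) ≤ (t : EReal) := by
          intro t
          exact hcomb t ((key y₁ t).mp (by rw [hb1]; exact bot_le))
            ((key y₂ t).mp (by rw [hb2]; exact bot_le))
        rw [hmb]
        by_contra hcon
        push_neg at hcon
        obtain ⟨r, hr1, hr2⟩ := EReal.exists_between_coe_real hcon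
        exact absurd (hall r) (not_le.mpr hr2)
      · obtain ⟨t, ht⟩ : ∃ t : ℝ, max (phiF A k y₁) (phiF A k y₂) = (t : EReal) :=
          ⟨(max (phiF A k y₁) (phiF A k y₂)).toReal,
            (EReal.coe_toReal hmlt.ne hmbot.ne').symm⟩
        rw [ht]
        exact hcomb t ((key y₁ t).mp (ht ▸ le_max_left _ _))
          ((key y₂ t).mp (ht ▸ le_max_right _ _))
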